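/- Erdős's upper bound: for fixed positive integers s_1 ≤ ... ≤ s_r and s = s_1·s_2···s_{r-1}, there is a constant C such that every r-uniform hypergraph on n vertices with more than C·n^{r - 1/s} edges contains a copy of the complete r-partite r-graph K(s_1,...,s_r). -/

import Mathlib

/-- `HasKCopy E t`: the `r`-uniform hypergraph on `Fin n` with edge set `E` contains a
copy of the complete `r`-partite `r`-graph `K(t 0, ..., t (r-1))`: pairwise disjoint
vertex sets `S i` of sizes `t i` all of whose transversals are edges. -/
def HasKCopy {r n : ℕ} (E : Finset (Finset (Fin n))) (t : Fin r → ℕ) : Prop :=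
  ∃ S : Fin r → Finset (Fin n),
    (∀ i j, i ≠ j → Disjoint (S i) (S j)) ∧ (∀ i, (S i).card = t i) ∧
    ∀ f : Fin r → Fin n, (∀ i, f i ∈ S i) → Finset.image f Finset.univ ∈ E

open Finset


lemma degree_sum {n m : ℕ} (E : Finset (Finset (Fin n))) (hE : ∀ e ∈ E, e.card = m+1) :
    ∑ T ∈ Finset.powersetCard m (Finset.univ : Finset (Fin n)),
      (Finset.univ.filter (fun v => v ∉ T ∧ insert v T ∈ E)).card
    = (m+1) * E.card := by
  have h3 : ((Finset.powersetCard m (Finset.univ : Finset (Fin n))).sigma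
          (fun T => Finset.univ.filter (fun v => v ∉ T ∧ insert v T ∈ E))).card
      = (E.sigma (fun e => e)).card := by
    refine Finset.card_bij' (fun a _ => ⟨insert a.2 a.1, a.2⟩)
      (fun b _ => ⟨b.1.erase b.2, b.2⟩) ?_ ?_ ?_ ?_
    · rintro ⟨T, v⟩ ha
      simp only [Finset.mem_sigma, Finset.mem_powersetCard, Finset.mem_filter] at ha
      simp only [Finset.mem_sigma]
      exact ⟨ha.2.2.2, Finset.mem_insert_self _ _⟩
    · rintro ⟨e, v⟩ hb
      simp only [Finset.mem_sigma] at hb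
      simp only [Finset.mem_sigma, Finset.mem_powersetCard, Finset.mem_filter]
      refine ⟨⟨Finset.subset_univ _, ?_⟩, Finset.mem_univ _, Finset.notMem_erase _ _, ?_⟩
      · rw [Finset.card_erase_of_mem hb.2, hE _ hb.1]; omega
      · rw [Finset.insert_erase hb.2]; exact hb.1
    · rintro ⟨T, v⟩ ha
      simp only [Finset.mem_sigma, Finset.mem_powersetCard, Finset.mem_filter] at ha
      simp [Finset.erase_insert ha.2.2.1]
    · rintro ⟨e, v⟩ hb
      simp only [Finset.mem_sigma] at hb
      simp [Finset.insert_erase hb.2]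
  rw [Finset.card_sigma, Finset.card_sigma] at h3
  rw [h3, Finset.sum_congr rfl hE, Finset.sum_const, smul_eq_mul, mul_comm]


lemma pair_count {n m t : ℕ} (E : Finset (Finset (Fin n))) :
    ∑ S ∈ Finset.powersetCard t (Finset.univ : Finset (Fin n)),
      ((Finset.powersetCard m (Finset.univ : Finset (Fin n))).filter
        (fun T => ∀ v ∈ S, v ∉ T ∧ insert v T ∈ E)).card
    = ∑ T ∈ Finset.powersetCard m (Finset.univ : Finset (Fin n)),
      ((Finset.univ.filter (fun v => v ∉ T ∧ insert v T ∈ E)).card.choose t) := by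
  classical
  have h1 : ∀ S : Finset (Fin n),
      ((Finset.powersetCard m (Finset.univ : Finset (Fin n))).filter
        (fun T => ∀ v ∈ S, v ∉ T ∧ insert v T ∈ E)).card
      = ∑ T ∈ Finset.powersetCard m (Finset.univ : Finset (Fin n)),
          if S ⊆ Finset.univ.filter (fun v => v ∉ T ∧ insert v T ∈ E) then 1 else 0 := by
    intro S
    rw [Finset.card_filter]
    refine Finset.sum_congr rfl fun T _ => ?_
    congr 1
    simp only [eq_iff_iff, Finset.subset_iff, Finset.mem_filter, Finset.mem_univ, true_and]
  have h2 : ∀ T : Finset (Fin n),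
      ((Finset.univ.filter (fun v => v ∉ T ∧ insert v T ∈ E)).card.choose t)
      = ∑ S ∈ Finset.powersetCard t (Finset.univ : Finset (Fin n)),
          if S ⊆ Finset.univ.filter (fun v => v ∉ T ∧ insert v T ∈ E) then 1 else 0 := by
    intro T
    rw [← Finset.card_powersetCard]
    have : Finset.powersetCard t (Finset.univ.filter (fun v => v ∉ T ∧ insert v T ∈ E))
        = (Finset.powersetCard t (Finset.univ : Finset (Fin n))).filter
            (fun S => S ⊆ Finset.univ.filter (fun v => v ∉ T ∧ insert v T ∈ E)) := by
      ext S
      simp only [Finset.mem_powersetCard, Finset.mem_filter, Finset.subset_univ, true_and]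
      tauto
    rw [this, Finset.card_filter]
  simp only [h1, h2]
  exact Finset.sum_comm



lemma image_univ_fin_succ {m n : ℕ} (f : Fin (m+1) → Fin n) :
    Finset.image f Finset.univ = insert (f 0) (Finset.image (f ∘ Fin.succ) Finset.univ) := by
  ext a
  simp [Fin.exists_fin_succ, eq_comm]

lemma extend_copy {n m : ℕ} (p : Fin (m+1) → ℕ) (hp : ∀ i, 0 < p i)
    (E : Finset (Finset (Fin n))) (S : Finset (Fin n)) (hS : S.card = p 0)
    (F : Finset (Finset (Fin n)))
    (hF : ∀ T ∈ F, ∀ v ∈ S, v ∉ T ∧ insert v T ∈ E)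
    (h : HasKCopy F (p ∘ Fin.succ)) : HasKCopy E p := by
  obtain ⟨Si, hdisj, hcard, htrans⟩ := h
  have hne : ∀ j, (Si j).Nonempty := by
    intro j
    rw [← Finset.card_pos, hcard j]
    exact hp _
  have hmemT : ∀ i, ∀ v ∈ Si i, ∃ T ∈ F, v ∈ T := by
    intro i v hv
    classical
    set f : Fin m → Fin n := Function.update (fun j => (hne j).choose) i v with hf
    have hfm : ∀ j, f j ∈ Si j := by
      intro j
      rcases eq_or_ne j i with rfl | hj
      · simpa [hf] using hv
      · simpa [hf, Function.update_of_ne hj] using (hne j).choose_spec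
    refine ⟨Finset.image f Finset.univ, htrans f hfm, ?_⟩
    exact Finset.mem_image.2 ⟨i, Finset.mem_univ _, by simp [hf]⟩
  have hSdisj : ∀ i, Disjoint S (Si i) := by
    intro i
    rw [Finset.disjoint_right]
    intro v hv hvS
    obtain ⟨T, hT, hvT⟩ := hmemT i v hv
    exact (hF T hT v hvS).1 hvT
  refine ⟨Fin.cases S Si, ?_, ?_, ?_⟩
  · intro i j hne'
    induction i using Fin.cases with
    | zero =>
      induction j using Fin.cases with
      | zero => exact absurd rfl hne'
      | succ j => simpa using hSdisj j
    | succ i =>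
      induction j using Fin.cases with
      | zero => simpa using (hSdisj i).symm
      | succ j =>
        simp only [Fin.cases_succ]
        exact hdisj i j (fun h => hne' (by rw [h]))
  · intro i
    induction i using Fin.cases with
    | zero => simpa using hS
    | succ i => simpa using hcard i
  · intro f hf
    have h0 : f 0 ∈ S := by simpa using hf 0
    have hsucc : ∀ j : Fin m, (f ∘ Fin.succ) j ∈ Si j := by
      intro j; simpa using hf j.succ
    have hT : Finset.image (f ∘ Fin.succ) Finset.univ ∈ F := htrans _ hsucc
    rw [image_univ_fin_succ f]
    exact (hF _ hT (f 0) h0).2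

lemma analytic_core {β : Type*} (PC : Finset β) (d : β → ℕ) (t m s' : ℕ) (nR M C' : ℝ)
    (ht : 1 ≤ t) (hs'1 : 1 ≤ s') (hn1 : 1 ≤ nR) (hC'0 : 0 ≤ C') (hM0 : 0 ≤ M)
    (hdegsum : (∑ T ∈ PC, (d T : ℝ)) = ((m : ℝ) + 2) * M)
    (hPC : (PC.card : ℝ) ≤ nR ^ ((m : ℝ) + 1))
    (hP : (∑ T ∈ PC, ((d T).choose t : ℝ)) ≤
      nR ^ ((t : ℝ)) * (C' * nR ^ ((m : ℝ) + 1 - 1 / (s' : ℝ))))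
    (hM : M > ((t : ℝ) + ((t.factorial : ℝ) * (C' + 1)) ^ (1 / (t : ℝ)))
      * nR ^ ((m : ℝ) + 2 - 1 / ((t : ℝ) * (s' : ℝ)))) : False := by
  have hn0 : (0 : ℝ) < nR := by linarith
  have ht0 : (0 : ℝ) < (t : ℝ) := by exact_mod_cast ht
  have hs'0 : (0 : ℝ) < (s' : ℝ) := by exact_mod_cast hs'1
  set B : ℝ := ((t.factorial : ℝ) * (C' + 1)) ^ (1 / (t : ℝ)) with hB_def
  have hB0 : 0 ≤ B := Real.rpow_nonneg (by positivity) _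
  set e : ℝ := (m : ℝ) + 2 - 1 / ((t : ℝ) * (s' : ℝ)) with he_def
  set e' : ℝ := (m : ℝ) + 1 - 1 / (s' : ℝ) with he'_def
  set X : ℝ := nR ^ ((t : ℝ) * ((m : ℝ) + 2) - 1 / (s' : ℝ)) with hX_def
  have hXpos : 0 < X := Real.rpow_pos_of_pos hn0 _
  set L : ℝ := ∑ T ∈ PC, ((d T - t : ℕ) : ℝ) with hL_def
  -- lower bound for L
  have h_sub : ((m : ℝ) + 2) * M - (t : ℝ) * (PC.card : ℝ) ≤ L := by
    rw [← hdegsum, hL_def]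
    have h1 : ∑ T ∈ PC, ((d T : ℝ) - (t : ℝ)) ≤ ∑ T ∈ PC, ((d T - t : ℕ) : ℝ) := by
      refine Finset.sum_le_sum fun T _ => ?_
      rcases le_total t (d T) with h | h
      · rw [Nat.cast_sub h]
      · have : ((d T - t : ℕ) : ℝ) = 0 := by
          rw [Nat.sub_eq_zero_of_le h]; simp
        rw [this]
        have : (d T : ℝ) ≤ (t : ℝ) := by exact_mod_cast h
        linarith
    have h2 : ∑ T ∈ PC, ((d T : ℝ) - (t : ℝ)) =
        (∑ T ∈ PC, (d T : ℝ)) - (PC.card : ℝ) * (t : ℝ) := by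
      rw [Finset.sum_sub_distrib, Finset.sum_const, nsmul_eq_mul]
    rw [h2] at h1
    linarith
  have hme : (m : ℝ) + 1 ≤ e := by
    rw [he_def]
    have h1 : 1 / ((t : ℝ) * (s' : ℝ)) ≤ 1 := by
      rw [div_le_one (by positivity)]
      exact_mod_cast Nat.one_le_iff_ne_zero.2 (Nat.mul_ne_zero (by omega) (by omega))
    linarith
  have hne : nR ^ ((m : ℝ) + 1) ≤ nR ^ e := Real.rpow_le_rpow_of_exponent_le hn1 hme
  have hL_low : B * nR ^ e < L := by
    have h1 : (t : ℝ) * (PC.card : ℝ) ≤ (t : ℝ) * nR ^ e :=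
      mul_le_mul_of_nonneg_left (hPC.trans hne) ht0.le
    have h2 : M ≤ ((m : ℝ) + 2) * M := le_mul_of_one_le_left hM0 (by linarith [show (0:ℝ) ≤ (m:ℝ) from Nat.cast_nonneg m])
    linarith
  have hBne0 : 0 ≤ B * nR ^ e := by positivity
  -- upper bound for L^t
  have h_ptwise : ∀ T ∈ PC, ((d T - t : ℕ) : ℝ) ^ t ≤
      (t.factorial : ℝ) * ((d T).choose t : ℝ) := by
    intro T _
    have hnat : (d T - t) ^ t ≤ t.factorial * (d T).choose t := by
      calc (d T - t) ^ t ≤ (d T + 1 - t) ^ t := Nat.pow_le_pow_left (by omega) t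
        _ ≤ (d T).descFactorial t := Nat.pow_sub_le_descFactorial (d T) t
        _ = t.factorial * (d T).choose t := Nat.descFactorial_eq_factorial_mul_choose _ _
    exact_mod_cast hnat
  have h_powsum : L ^ t ≤ (PC.card : ℝ) ^ (t - 1) *
      ∑ T ∈ PC, ((d T - t : ℕ) : ℝ) ^ t := by
    have := pow_sum_le_card_mul_sum_pow
      (s := PC) (f := fun T => ((d T - t : ℕ) : ℝ))
      (fun T _ => by positivity) (t - 1)
    rwa [Nat.sub_add_cancel ht] at this
  have h_upper : L ^ t ≤ (t.factorial : ℝ) * C' * X := by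
    have hcast : ((t - 1 : ℕ) : ℝ) = (t : ℝ) - 1 := by
      rw [Nat.cast_sub ht]; simp
    have h4 : (PC.card : ℝ) ^ (t - 1) ≤ nR ^ (((m : ℝ) + 1) * ((t : ℝ) - 1)) := by
      calc (PC.card : ℝ) ^ (t - 1) ≤ (nR ^ ((m : ℝ) + 1)) ^ (t - 1) :=
            pow_le_pow_left₀ (by positivity) hPC _
        _ = nR ^ (((m : ℝ) + 1) * ((t : ℝ) - 1)) := by
            rw [← Real.rpow_natCast (nR ^ ((m : ℝ) + 1)) (t - 1), ← Real.rpow_mul hn0.le, hcast]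
    have h2 : ∑ T ∈ PC, ((d T - t : ℕ) : ℝ) ^ t ≤
        (t.factorial : ℝ) * ∑ T ∈ PC, ((d T).choose t : ℝ) := by
      rw [Finset.mul_sum]
      exact Finset.sum_le_sum h_ptwise
    have hXeq : nR ^ (((m : ℝ) + 1) * ((t : ℝ) - 1)) * (nR ^ ((t : ℝ)) * nR ^ e') = X := by
      rw [← Real.rpow_add hn0, ← Real.rpow_add hn0, hX_def, he'_def]
      congr 1
      ring
    calc L ^ t ≤ (PC.card : ℝ) ^ (t - 1) * ∑ T ∈ PC, ((d T - t : ℕ) : ℝ) ^ t := h_powsum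
      _ ≤ (PC.card : ℝ) ^ (t - 1) * ((t.factorial : ℝ) * ∑ T ∈ PC, ((d T).choose t : ℝ)) :=
          mul_le_mul_of_nonneg_left h2 (by positivity)
      _ ≤ nR ^ (((m : ℝ) + 1) * ((t : ℝ) - 1)) *
            ((t.factorial : ℝ) * (nR ^ ((t : ℝ)) * (C' * nR ^ e'))) := by
          have h6 : (t.factorial : ℝ) * (∑ T ∈ PC, ((d T).choose t : ℝ)) ≤
              (t.factorial : ℝ) * (nR ^ ((t : ℝ)) * (C' * nR ^ e')) :=
            mul_le_mul_of_nonneg_left hP (by positivity)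
          exact mul_le_mul h4 h6 (by positivity) (by positivity)
      _ = (t.factorial : ℝ) * C' * X := by rw [← hXeq]; ring
  -- lower bound for L^t
  have h_lower : (t.factorial : ℝ) * (C' + 1) * X < L ^ t := by
    have h1 : (B * nR ^ e) ^ t < L ^ t :=
      pow_lt_pow_left₀ hL_low hBne0 (by omega)
    have h2 : (B * nR ^ e) ^ t = (t.factorial : ℝ) * (C' + 1) * X := by
      rw [mul_pow]
      have hBt : B ^ t = (t.factorial : ℝ) * (C' + 1) := by
        rw [hB_def, ← Real.rpow_natCast (((t.factorial : ℝ) * (C' + 1)) ^ (1 / (t : ℝ))) t,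
          ← Real.rpow_mul (by positivity)]
        rw [one_div_mul_cancel (by positivity : (t:ℝ) ≠ 0), Real.rpow_one]
      have het : (nR ^ e) ^ t = X := by
        rw [← Real.rpow_natCast (nR ^ e) t, ← Real.rpow_mul hn0.le, hX_def, he_def]
        congr 1
        field_simp
      rw [hBt, het]
    rw [← h2]; exact h1
  have : (t.factorial : ℝ) * (C' + 1) * X < (t.factorial : ℝ) * C' * X :=
    lt_of_lt_of_le h_lower h_upper
  have hfacpos : (0:ℝ) < (t.factorial : ℝ) := by positivity
  nlinarith [mul_pos hfacpos hXpos]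

lemma erdos_key (m : ℕ) : ∀ p : Fin (m+1) → ℕ, (∀ i, 0 < p i) →
    ∃ C : ℝ, 0 ≤ C ∧ ∀ n : ℕ, ∀ E : Finset (Finset (Fin n)),
      (∀ e ∈ E, e.card = m+1) →
      (E.card : ℝ) > C * (n : ℝ) ^
        ((m : ℝ) + 1 - 1 / ((∏ i : Fin m, p (Fin.castLE (Nat.le_succ m) i) : ℕ) : ℝ)) →
      HasKCopy E p := by
  induction m with
  | zero =>
    intro p hp
    refine ⟨p 0, by positivity, ?_⟩
    intro n E hE hgt
    norm_num at hgt
    have hlt : p 0 < E.card := by exact_mod_cast hgt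
    classical
    set A : Finset (Fin n) := Finset.univ.filter (fun v => ({v} : Finset (Fin n)) ∈ E) with hA
    have hEA : E ⊆ A.image (fun v => ({v} : Finset (Fin n))) := by
      intro e he
      obtain ⟨v, rfl⟩ := Finset.card_eq_one.1 (hE e he)
      exact Finset.mem_image.2 ⟨v, Finset.mem_filter.2 ⟨Finset.mem_univ _, he⟩, rfl⟩
    have hcard : p 0 ≤ A.card := by
      have := (Finset.card_le_card hEA).trans (Finset.card_image_le)
      omega
    obtain ⟨S0, hS0A, hS0⟩ := Finset.exists_subset_card_eq hcard
    refine ⟨fun _ => S0, ?_, ?_, ?_⟩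
    · intro i j hij
      exact absurd (by omega : i = j) hij
    · intro i
      have hi : i = 0 := by omega
      rw [hi, hS0]
    · intro f hf
      have h1 : Finset.image f Finset.univ = {f 0} := by
        rw [show (Finset.univ : Finset (Fin 1)) = {0} from rfl, Finset.image_singleton]
      rw [h1]
      have := hS0A (hf 0)
      exact (Finset.mem_filter.1 this).2
  | succ m ih =>
    intro p hp
    classical
    set t := p 0 with ht_def
    have ht : 1 ≤ t := hp 0
    obtain ⟨C', hC'0, hC'⟩ := ih (p ∘ Fin.succ) (fun i => hp _)
    set s' : ℕ := (∏ i : Fin m, (p ∘ Fin.succ) (Fin.castLE (Nat.le_succ m) i)) with hs'def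
    set s : ℕ := (∏ i : Fin (m+1), p (Fin.castLE (Nat.le_succ (m+1)) i)) with hsdef
    have hs'1 : 1 ≤ s' := Finset.one_le_prod' (fun i _ => hp _)
    have hsfact : s = t * s' := by
      rw [hsdef, Fin.prod_univ_succ, hs'def]
      exact congrArg (p 0 * ·) (Finset.prod_congr rfl (fun i _ => rfl))
    have hs1 : 1 ≤ s := by
      rw [hsfact]; exact Nat.one_le_iff_ne_zero.2 (by positivity)
    set B : ℝ := ((t.factorial : ℝ) * (C' + 1)) ^ (1 / (t : ℝ)) with hB
    have hB0 : 0 ≤ B := Real.rpow_nonneg (by positivity) _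
    refine ⟨(t : ℝ) + B, by positivity, ?_⟩
    intro n E hE hgt
    by_contra hcopy
    -- notation
    set e : ℝ := ((m : ℝ) + 1 + 1 - 1 / (s : ℝ)) with he_def
    set e' : ℝ := ((m : ℝ) + 1 - 1 / (s' : ℝ)) with he'_def
    have hgt' : (E.card : ℝ) > ((t : ℝ) + B) * (n : ℝ) ^ e := by
      convert hgt using 3
      push_cast
      ring
    -- n = 0 case
    rcases Nat.eq_zero_or_pos n with rfl | hn
    · have hE0 : E = ∅ := by
        refine Finset.eq_empty_of_forall_notMem (fun x hx => ?_)
        have h1 := hE x hx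
        have h2 : x.card ≤ 0 := by
          simpa using Finset.card_le_card (Finset.subset_univ x)
        omega
      rw [hE0] at hgt'
      simp only [Finset.card_empty, Nat.cast_zero] at hgt'
      have : 0 ≤ ((t : ℝ) + B) * (0 : ℝ) ^ e := by positivity
      push_cast at hgt' this
      linarith
    have hn1 : (1 : ℝ) ≤ (n : ℝ) := by exact_mod_cast hn
    have hn0 : (0 : ℝ) < (n : ℝ) := by linarith
    set deg : Finset (Fin n) → ℕ :=
      fun T => (Finset.univ.filter (fun v => v ∉ T ∧ insert v T ∈ E)).card with hdeg_def
    set F : Finset (Fin n) → Finset (Finset (Fin n)) :=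
      fun S => (Finset.powersetCard (m+1) (Finset.univ : Finset (Fin n))).filter
        (fun T => ∀ v ∈ S, v ∉ T ∧ insert v T ∈ E) with hF_def
    -- per-S bound
    have h_perS : ∀ S ∈ Finset.powersetCard t (Finset.univ : Finset (Fin n)),
        ((F S).card : ℝ) ≤ C' * (n : ℝ) ^ e' := by
      intro S hS
      by_contra hgt2
      push_neg at hgt2
      apply hcopy
      refine extend_copy p hp E S (Finset.mem_powersetCard.1 hS).2 (F S)
        (fun T hT => (Finset.mem_filter.1 hT).2) ?_
      refine hC' n (F S) (fun T hT => (Finset.mem_powersetCard.1 (Finset.mem_filter.1 hT).1).2) ?_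
      exact hgt2
    -- assemble counting facts and conclude via analytic_core
    have hscast : (s : ℝ) = (t : ℝ) * (s' : ℝ) := by exact_mod_cast hsfact
    have h_deg := degree_sum (n := n) (m := m+1) E hE
    have h_pair := pair_count (n := n) (m := m+1) (t := t) E
    refine analytic_core (Finset.powersetCard (m+1) (Finset.univ : Finset (Fin n)))
      (fun T => (Finset.univ.filter (fun v => v ∉ T ∧ insert v T ∈ E)).card)
      t m s' (n : ℝ) (E.card : ℝ) C' ht hs'1 hn1 hC'0 (by positivity) ?_ ?_ ?_ ?_
    · -- degree sum
      have h2 : ((∑ T ∈ Finset.powersetCard (m+1) (Finset.univ : Finset (Fin n)),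
          (Finset.univ.filter (fun v => v ∉ T ∧ insert v T ∈ E)).card : ℕ) : ℝ)
          = ((m+1+1 : ℕ) : ℝ) * (E.card : ℝ) := by exact_mod_cast congrArg Nat.cast h_deg
      push_cast at h2 ⊢
      convert h2 using 2
      ring
    · -- card of powersetCard
      rw [Finset.card_powersetCard, Finset.card_univ, Fintype.card_fin,
        show ((m:ℝ)+1) = ((m+1:ℕ):ℝ) by push_cast; ring, Real.rpow_natCast]
      exact_mod_cast Nat.choose_le_pow n (m+1)
    · -- choose sum bound
      have hc0 : (∑ T ∈ Finset.powersetCard (m+1) (Finset.univ : Finset (Fin n)),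
            (((Finset.univ.filter (fun v => v ∉ T ∧ insert v T ∈ E)).card).choose t : ℝ))
          = ∑ S ∈ Finset.powersetCard t (Finset.univ : Finset (Fin n)),
            (((Finset.powersetCard (m+1) (Finset.univ : Finset (Fin n))).filter
              (fun T => ∀ v ∈ S, v ∉ T ∧ insert v T ∈ E)).card : ℝ) := by
        exact_mod_cast congrArg Nat.cast h_pair.symm
      rw [hc0]
      have hc1 : ∑ S ∈ Finset.powersetCard t (Finset.univ : Finset (Fin n)),
            (((Finset.powersetCard (m+1) (Finset.univ : Finset (Fin n))).filter
              (fun T => ∀ v ∈ S, v ∉ T ∧ insert v T ∈ E)).card : ℝ)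
          ≤ ((Finset.powersetCard t (Finset.univ : Finset (Fin n))).card : ℝ)
              * (C' * (n : ℝ) ^ e') := by
        have := Finset.sum_le_card_nsmul
          (Finset.powersetCard t (Finset.univ : Finset (Fin n)))
          (fun S => (((Finset.powersetCard (m+1) (Finset.univ : Finset (Fin n))).filter
              (fun T => ∀ v ∈ S, v ∉ T ∧ insert v T ∈ E)).card : ℝ))
          (C' * (n : ℝ) ^ e') h_perS
        simpa [nsmul_eq_mul] using this
      refine hc1.trans ?_
      have hc2 : ((Finset.powersetCard t (Finset.univ : Finset (Fin n))).card : ℝ)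
          ≤ (n : ℝ) ^ ((t : ℝ)) := by
        rw [Finset.card_powersetCard, Finset.card_univ, Fintype.card_fin, Real.rpow_natCast]
        exact_mod_cast Nat.choose_le_pow n t
      have : 0 ≤ C' * (n : ℝ) ^ e' := by positivity
      calc ((Finset.powersetCard t (Finset.univ : Finset (Fin n))).card : ℝ)
            * (C' * (n : ℝ) ^ e')
          ≤ (n : ℝ) ^ ((t : ℝ)) * (C' * (n : ℝ) ^ e') := by
            exact mul_le_mul_of_nonneg_right hc2 this
        _ = (n : ℝ) ^ ((t : ℝ)) * (C' * (n : ℝ) ^ ((m : ℝ) + 1 - 1 / (s' : ℝ))) := by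
            rw [he'_def]
    · -- final inequality hM
      have hee : ((m : ℝ) + 1 + 1 - 1 / (s : ℝ))
          = ((m : ℝ) + 2 - 1 / ((t : ℝ) * (s' : ℝ))) := by
        rw [hscast]; ring
      rw [← hee]
      exact hgt'

/-- Erdős's upper bound: for fixed `1 ≤ s_1 ≤ ⋯ ≤ s_r` and `s = s_1 ⋯ s_{r-1}`, there is
a constant `C` such that every `r`-uniform hypergraph on `n` vertices with more than
`C · n^(r - 1/s)` edges contains a copy of `K(s_1, ..., s_r)`. -/
theorem erdos_box (r : ℕ) (hr : 1 ≤ r) (p : Fin r → ℕ)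
    (hp : ∀ i, 0 < p i) (hmono : Monotone p) :
    ∃ C : ℝ, ∀ n : ℕ, ∀ E : Finset (Finset (Fin n)),
      (∀ e ∈ E, e.card = r) →
      (E.card : ℝ) >
        C * (n : ℝ) ^ ((r : ℝ) - 1 / ((∏ i : Fin (r - 1), p (Fin.castLE (by omega) i) : ℕ) : ℝ)) →
      HasKCopy E p := by
  obtain ⟨m, rfl⟩ : ∃ m, r = m + 1 := ⟨r - 1, by omega⟩
  obtain ⟨C, _, hC⟩ := erdos_key m p hp
  refine ⟨C, fun n E hE hgt => hC n E hE ?_⟩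
  have hprod : (∏ i : Fin (m+1-1), p (Fin.castLE (by omega) i))
      = (∏ i : Fin m, p (Fin.castLE (Nat.le_succ m) i)) := rfl
  rw [hprod, show ((m+1 : ℕ) : ℝ) = (m : ℝ) + 1 from by push_cast; ring] at hgt
  exact hgt
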